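/- Let d ≥ 2 and let p : [0,1] → ℝ^d be a continuously differentiable path with 0 < p_n(t) < 1 and Σ_n p_n(t) = 1 for all t and n. Let S(p) := −Σ_{n=1}^d p_n ln p_n denote the Shannon entropy. Then ∫₀¹ √(Σ_{n=1}^d (p_n'(t)/p_n(t))²) dt ≥ |ln S(p(0)) − ln S(p(1))|. -/

import Mathlib

open Real

/-- The Shannon entropy `S(p) = −∑ n, p n * log (p n)`. -/
noncomputable def shannonEntropy {d : ℕ} (p : Fin d → ℝ) : ℝ :=
  -∑ n, p n * Real.log (p n)

/-- Pointwise Cauchy–Schwarz type bound. -/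
lemma cs_aux {d : ℕ} (a b : Fin d → ℝ) (hb : ∀ n, 0 ≤ b n) :
    |∑ n, a n * b n| ≤ Real.sqrt (∑ n, (a n) ^ 2) * (∑ n, b n) := by
  have h1 : |∑ n, a n * b n| = Real.sqrt ((∑ n, a n * b n) ^ 2) := by
    rw [Real.sqrt_sq_eq_abs]
  rw [h1]
  have h2 : (∑ n, a n * b n) ^ 2 ≤ (∑ n, (a n) ^ 2) * ∑ n, (b n) ^ 2 :=
    Finset.sum_mul_sq_le_sq_mul_sq _ _ _
  calc Real.sqrt ((∑ n, a n * b n) ^ 2)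
      ≤ Real.sqrt ((∑ n, (a n) ^ 2) * ∑ n, (b n) ^ 2) := Real.sqrt_le_sqrt h2
    _ = Real.sqrt (∑ n, (a n) ^ 2) * Real.sqrt (∑ n, (b n) ^ 2) := by
        rw [Real.sqrt_mul (by positivity)]
    _ ≤ Real.sqrt (∑ n, (a n) ^ 2) * (∑ n, b n) := by
        apply mul_le_mul_of_nonneg_left _ (Real.sqrt_nonneg _)
        calc Real.sqrt (∑ n, (b n) ^ 2) ≤ Real.sqrt ((∑ n, b n) ^ 2) :=
              Real.sqrt_le_sqrt (Finset.sum_sq_le_sq_sum_of_nonneg (fun n _ => hb n))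
          _ = |∑ n, b n| := Real.sqrt_sq_eq_abs _
          _ = ∑ n, b n := abs_of_nonneg (Finset.sum_nonneg fun n _ => hb n)

/-- **Entropic lower bound on path length.**
For `d ≥ 2` and a continuously differentiable path `p : [0,1] → ℝ^d` of probability
vectors with `0 < p n t < 1`, the length of the path in the metric
`g_p(x,y) = ∑ n, x n * y n / (p n)²` is at least
`|log S(p 0) − log S(p 1)|`, where `S` is the Shannon entropy. -/
theorem entropic_path_length_lower_bound
    (d : ℕ) (hd : 2 ≤ d) (p : ℝ → Fin d → ℝ)
    (hC1 : ∀ n, ContDiff ℝ 1 (fun t => p t n))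
    (hpos : ∀ t ∈ Set.Icc (0:ℝ) 1, ∀ n, 0 < p t n ∧ p t n < 1)
    (hsum : ∀ t ∈ Set.Icc (0:ℝ) 1, ∑ n, p t n = 1) :
    ∫ t in (0:ℝ)..1,
        Real.sqrt (∑ n, (deriv (fun s => p s n) t / p t n) ^ 2) ≥
      |Real.log (shannonEntropy (p 0)) - Real.log (shannonEntropy (p 1))| := by
  have hFin : Nonempty (Fin d) := ⟨⟨0, by omega⟩⟩
  set f' : Fin d → ℝ → ℝ := fun n t => deriv (fun s => p s n) t with hf'def
  have hdiff : ∀ n t, HasDerivAt (fun s => p s n) (f' n t) t := fun n t =>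
    (((hC1 n).differentiable one_ne_zero) t).hasDerivAt
  have hcont : ∀ n, Continuous (fun t => p t n) := fun n => (hC1 n).continuous
  have hcont' : ∀ n, Continuous (f' n) := fun n => (hC1 n).continuous_deriv le_rfl
  set S : ℝ → ℝ := fun t => shannonEntropy (p t) with hSdef
  have hSsum : ∀ t, S t = ∑ n, -(p t n * Real.log (p t n)) := by
    intro t; simp [hSdef, shannonEntropy]
  -- positivity of entropy on Icc
  have hterm : ∀ t ∈ Set.Icc (0:ℝ) 1, ∀ n, 0 < -(p t n * Real.log (p t n)) := by
    intro t ht n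
    have h1 := (hpos t ht n).1
    have h2 := (hpos t ht n).2
    have hlog : Real.log (p t n) < 0 := Real.log_neg h1 h2
    nlinarith
  have hSpos : ∀ t ∈ Set.Icc (0:ℝ) 1, 0 < S t := by
    intro t ht
    rw [hSsum]
    exact Finset.sum_pos (fun n _ => hterm t ht n) Finset.univ_nonempty
  -- continuity of S on Icc
  have hScont : ContinuousOn S (Set.Icc (0:ℝ) 1) := by
    have : ∀ n, ContinuousOn (fun t => -(p t n * Real.log (p t n))) (Set.Icc (0:ℝ) 1) := by
      intro n
      exact (((hcont n).continuousOn).mul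
        (((hcont n).continuousOn).log (fun t ht => (hpos t ht n).1.ne'))).neg
    exact (continuousOn_finset_sum Finset.univ (fun n _ => this n)).congr
      (fun t _ => hSsum t)
  set F : ℝ → ℝ := fun t => Real.log (S t) with hFdef
  have hFcont : ContinuousOn F (Set.Icc (0:ℝ) 1) :=
    hScont.log (fun t ht => (hSpos t ht).ne')
  -- the candidate derivative of F
  set G : ℝ → ℝ := fun t =>
    (∑ n, (f' n t / p t n) * (-(p t n * Real.log (p t n)))) / S t with hGdef
  set g : ℝ → ℝ := fun t => Real.sqrt (∑ n, (f' n t / p t n) ^ 2) with hgdef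
  -- derivative of F on interior
  have hFderiv : ∀ t ∈ Set.Ioo (0:ℝ) 1, HasDerivAt F (G t) t := by
    intro t ht
    have htIcc : t ∈ Set.Icc (0:ℝ) 1 := Set.Ioo_subset_Icc_self ht
    -- sum of derivatives is zero
    have hsum0 : ∑ n, f' n t = 0 := by
      have hev : (fun s => ∑ n, p s n) =ᶠ[nhds t] fun _ => (1:ℝ) := by
        filter_upwards [Ioo_mem_nhds ht.1 ht.2] with s hs
        exact hsum s (Set.Ioo_subset_Icc_self hs)
      have h1 : HasDerivAt (fun s => ∑ n, p s n) (∑ n, f' n t) t :=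
        HasDerivAt.fun_sum (fun n _ => hdiff n t)
      have h2 : HasDerivAt (fun s => ∑ n, p s n) 0 t :=
        (hasDerivAt_const t (1:ℝ)).congr_of_eventuallyEq hev
      exact h1.unique h2
    -- derivative of S
    have hSderiv : HasDerivAt S (-∑ n, (f' n t * Real.log (p t n) + f' n t)) t := by
      have h1 : ∀ n, HasDerivAt (fun s => -(p s n * Real.log (p s n)))
          (-(f' n t * Real.log (p t n) + p t n * (f' n t / p t n))) t := by
        intro n
        exact (((hdiff n t).mul ((hdiff n t).log (hpos t htIcc n).1.ne'))).neg
      have h2 : HasDerivAt (fun s => ∑ n, -(p s n * Real.log (p s n)))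
          (∑ n, -(f' n t * Real.log (p t n) + p t n * (f' n t / p t n))) t :=
        HasDerivAt.fun_sum (fun n _ => h1 n)
      have h3 : (∑ n, -(f' n t * Real.log (p t n) + p t n * (f' n t / p t n)))
          = -∑ n, (f' n t * Real.log (p t n) + f' n t) := by
        rw [← Finset.sum_neg_distrib]
        apply Finset.sum_congr rfl
        intro n _
        have hne := (hpos t htIcc n).1.ne'
        field_simp
      rw [h3] at h2
      exact h2.congr_of_eventuallyEq (Filter.Eventually.of_forall fun s => hSsum s)
    have hSne : S t ≠ 0 := (hSpos t htIcc).ne'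
    have hFd : HasDerivAt F ((-∑ n, (f' n t * Real.log (p t n) + f' n t)) / S t) t :=
      hSderiv.log hSne
    have heq : (-∑ n, (f' n t * Real.log (p t n) + f' n t)) / S t = G t := by
      rw [hGdef]
      congr 1
      rw [Finset.sum_add_distrib, hsum0, add_zero, ← Finset.sum_neg_distrib]
      apply Finset.sum_congr rfl
      intro n _
      have hne := (hpos t htIcc n).1.ne'
      field_simp
    rwa [heq] at hFd
  -- pointwise bound |G t| ≤ g t on Icc
  have hbound : ∀ t ∈ Set.Icc (0:ℝ) 1, |G t| ≤ g t := by
    intro t ht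
    have hSt := hSpos t ht
    have h1 : |G t| = |∑ n, (f' n t / p t n) * (-(p t n * Real.log (p t n)))| / S t := by
      rw [hGdef, abs_div, abs_of_pos hSt]
    rw [h1, div_le_iff₀ hSt]
    have := cs_aux (fun n => f' n t / p t n) (fun n => -(p t n * Real.log (p t n)))
      (fun n => (hterm t ht n).le)
    calc |∑ n, (f' n t / p t n) * (-(p t n * Real.log (p t n)))|
        ≤ Real.sqrt (∑ n, (f' n t / p t n) ^ 2) * (∑ n, -(p t n * Real.log (p t n))) := this
      _ = g t * S t := by rw [hgdef, hSsum]
  -- integrability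
  have huIcc : Set.uIcc (0:ℝ) 1 = Set.Icc (0:ℝ) 1 := Set.uIcc_of_le zero_le_one
  have hgcont : ContinuousOn g (Set.Icc (0:ℝ) 1) := by
    apply Real.continuous_sqrt.comp_continuousOn
    apply continuousOn_finset_sum
    intro n _
    exact (((hcont' n).continuousOn).div ((hcont n).continuousOn)
      (fun t ht => (hpos t ht n).1.ne')).pow 2
  have hGcont : ContinuousOn G (Set.Icc (0:ℝ) 1) := by
    apply ContinuousOn.div _ hScont (fun t ht => (hSpos t ht).ne')
    apply continuousOn_finset_sum
    intro n _
    exact (((hcont' n).continuousOn).div ((hcont n).continuousOn)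
      (fun t ht => (hpos t ht n).1.ne')).mul
      ((((hcont n).continuousOn).mul
        (((hcont n).continuousOn).log (fun t ht => (hpos t ht n).1.ne'))).neg)
  have hGint : IntervalIntegrable G MeasureTheory.volume 0 1 :=
    (huIcc ▸ hGcont).intervalIntegrable
  have hgint : IntervalIntegrable g MeasureTheory.volume 0 1 :=
    (huIcc ▸ hgcont).intervalIntegrable
  -- FTC
  have hFTC : ∫ t in (0:ℝ)..1, G t = F 1 - F 0 :=
    intervalIntegral.integral_eq_sub_of_hasDerivAt_of_le zero_le_one hFcont hFderiv hGint
  have hmain : |F 0 - F 1| ≤ ∫ t in (0:ℝ)..1, g t := by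
    rw [abs_sub_comm, ← hFTC]
    calc |∫ t in (0:ℝ)..1, G t| ≤ ∫ t in (0:ℝ)..1, |G t| :=
          intervalIntegral.abs_integral_le_integral_abs zero_le_one
      _ ≤ ∫ t in (0:ℝ)..1, g t :=
          intervalIntegral.integral_mono_on zero_le_one hGint.abs hgint hbound
  exact hmain
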